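/- Let G be a countable group, K a field, and A a finite-dimensional K-vector space. Then every linear subshift of A^G is of finite type if and only if A^G satisfies the descending chain condition on linear subshifts (every decreasing sequence of linear subshifts eventually stabilizes). -/

import Mathlib

def shiftSigma (G : Type*) [Group G] {A : Type*} (D : Set G) (P : Set (D → A)) :
    Set (G → A) :=
  {x | ∀ g : G, (fun d : D => x (g * (d : G))) ∈ P}

def prodiscreteTop (G A : Type*) : TopologicalSpace (G → A) :=
  @Pi.topologicalSpace G (fun _ => A) (fun _ => ⊥)

def IsLinearSubshift (K : Type*) {G A : Type*} [Field K] [Group G] [AddCommGroup A]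
    [Module K A] (S : Set (G → A)) : Prop :=
  (∃ M : Submodule K (G → A), (M : Set (G → A)) = S) ∧
    (∀ g : G, ∀ x ∈ S, (fun h => x (g⁻¹ * h)) ∈ S) ∧
    @IsClosed _ (prodiscreteTop G A) S

def IsSFT {G A : Type*} [Group G] (S : Set (G → A)) : Prop :=
  ∃ (D : Finset G) (P : Set (↥(D : Set G) → A)), S = shiftSigma G (D : Set G) P

def IsLCA (K : Type*) {G A : Type*} [Field K] [Group G] [AddCommGroup A] [Module K A]
    (τ : (G → A) → (G → A)) : Prop :=
  IsLinearMap K τ ∧ ∃ (M : Finset G) (μ : (↥(M : Set G) → A) → A), IsLinearMap K μ ∧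
    ∀ (x : G → A) (g : G), τ x g = μ (fun m : (M : Set G) => x (g * (m : G)))

set_option linter.unusedSectionVars false

section helpers

variable (K : Type*) {G A : Type*} [Field K] [Group G] [AddCommGroup A] [Module K A]

/-- restriction to a finite window after translating by `g` -/
def resg (E : Finset G) (g : G) : (G → A) →ₗ[K] (↥(E : Set G) → A) :=
  LinearMap.funLeft K A fun d : ↥(E : Set G) => g * (d : G)

def resE (E : Finset G) : (G → A) →ₗ[K] (↥(E : Set G) → A) :=
  LinearMap.funLeft K A fun d : ↥(E : Set G) => (d : G)

def resI {E F : Finset G} (h : (E : Set G) ⊆ (F : Set G)) :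
    (↥(F : Set G) → A) →ₗ[K] (↥(E : Set G) → A) :=
  LinearMap.funLeft K A (Set.inclusion h)

theorem resE_comp {E F : Finset G} (h : (E : Set G) ⊆ (F : Set G)) :
    (resI K (A := A) h).comp (resE K F) = resE K E := rfl

theorem resg_comp {E F : Finset G} (h : (E : Set G) ⊆ (F : Set G)) (g : G) :
    (resI K (A := A) h).comp (resg K F g) = resg K E g := rfl

theorem mem_of_closed_approx {S : Set (G → A)} (hS : @IsClosed _ (prodiscreteTop G A) S)
    {x : G → A} (h : ∀ F : Finset G, ∃ y ∈ S, ∀ g ∈ F, y g = x g) : x ∈ S := by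
  letI : TopologicalSpace A := ⊥
  by_contra hx
  have hopen : IsOpen Sᶜ := hS.isOpen_compl
  obtain ⟨I, u, hu, hsub⟩ := isOpen_pi_iff.mp hopen x hx
  obtain ⟨y, hyS, hy⟩ := h I
  exact hsub (fun i hi => by rw [hy i hi]; exact (hu i hi).2) hyS

theorem shiftSigma_closed (E : Finset G) (P : Set (↥(E : Set G) → A)) :
    @IsClosed _ (prodiscreteTop G A) (shiftSigma G (E : Set G) P) := by
  letI : TopologicalSpace A := ⊥
  haveI : DiscreteTopology A := ⟨rfl⟩
  have hrw : shiftSigma G (E : Set G) P =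
      ⋂ g : G, (fun x : G → A => fun d : ↥(E : Set G) => x (g * d)) ⁻¹' P := by
    ext x
    simp only [shiftSigma, Set.mem_setOf_eq, Set.mem_iInter, Set.mem_preimage]
  rw [hrw]
  exact isClosed_iInter fun g =>
    (isClosed_discrete P).preimage (continuous_pi fun d => continuous_apply _)

theorem antitone_stabilizes {V : Type*} [AddCommGroup V] [Module K V] [IsArtinian K V]
    (f : ℕ → Submodule K V) (hf : ∀ n, f (n + 1) ≤ f n) :
    ∃ n₀, ∀ n, n₀ ≤ n → f n = f n₀ := by
  have hanti : Antitone f := antitone_nat_of_succ_le hf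
  obtain ⟨n, hn⟩ := IsArtinian.monotone_stabilizes (R := K) (M := V)
    ⟨fun k => OrderDual.toDual (f k), fun a b hab => hanti hab⟩
  exact ⟨n, fun m hm => (hn m hm).symm⟩

end helpers
theorem dcc_to_sft {G : Type*} (K A : Type*) [Group G] [Countable G] [Field K]
    [AddCommGroup A] [Module K A]
    (hdcc : ∀ Ss : ℕ → Set (G → A), (∀ n, IsLinearSubshift K (Ss n)) →
        (∀ n, Ss (n + 1) ⊆ Ss n) → ∃ n₀ : ℕ, ∀ n ≥ n₀, Ss n = Ss n₀)
    (S : Set (G → A)) (hS : IsLinearSubshift K S) : IsSFT S := by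
  obtain ⟨⟨M, hM⟩, hinv, hcl⟩ := hS
  haveI : Nonempty G := ⟨1⟩
  classical
  obtain ⟨e, he⟩ := exists_surjective_nat G
  set E : ℕ → Finset G := fun k => Finset.image e (Finset.range (k + 1)) with hE
  have hEsub : ∀ {k j : ℕ}, k ≤ j → (E k : Set G) ⊆ (E j : Set G) := by
    intro k j h
    exact Finset.coe_subset.mpr
      (Finset.image_subset_image (Finset.range_subset_range.mpr (Nat.succ_le_succ h)))
  have hcover : ∀ F : Finset G, ∃ k, (F : Set G) ⊆ (E k : Set G) := by
    intro F
    choose nf hnf using fun g => he g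
    refine ⟨F.sup nf, fun g hg => ?_⟩
    simp only [hE, Finset.coe_image, Set.mem_image, Finset.mem_coe, Finset.mem_range]
    exact ⟨nf g, by
      have : nf g ≤ F.sup nf := Finset.le_sup hg
      omega, hnf g⟩
  set P : ∀ k : ℕ, Submodule K (↥(E k : Set G) → A) :=
    fun k => M.map (resE K (E k)) with hP
  set Sig : ℕ → Set (G → A) :=
    fun k => shiftSigma G (E k : Set G) (P k : Set _) with hSig
  have hmem : ∀ k (x : G → A), x ∈ Sig k ↔ ∀ g : G, resg K (E k) g x ∈ P k :=
    fun k x => Iff.rfl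
  -- S is contained in every Sig k
  have hSsub : ∀ k, S ⊆ Sig k := by
    intro k x hx
    rw [hmem]
    intro g
    have hy : (fun h => x (g * h)) ∈ S := by simpa using hinv g⁻¹ x hx
    refine Submodule.mem_map.mpr ⟨fun h => x (g * h), ?_, rfl⟩
    rw [← SetLike.mem_coe, hM]; exact hy
  -- the Sig are decreasing
  have hdecr : ∀ k, Sig (k + 1) ⊆ Sig k := by
    intro k x hx
    rw [hmem] at hx ⊢
    intro g
    obtain ⟨y, hyM, hyr⟩ := Submodule.mem_map.mp (hx g)
    exact Submodule.mem_map.mpr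
      ⟨y, hyM, funext fun d => congrFun hyr ⟨(d : G), hEsub (Nat.le_succ k) d.2⟩⟩
  -- each Sig is a linear subshift
  have hlin : ∀ k, IsLinearSubshift K (Sig k) := by
    intro k
    refine ⟨⟨⨅ g : G, (P k).comap (resg K (E k) g), ?_⟩, ?_, shiftSigma_closed _ _⟩
    · ext x
      simp only [SetLike.mem_coe, Submodule.mem_iInf, Submodule.mem_comap]
      exact (hmem k x).symm
    · intro g x hx
      rw [hmem] at hx ⊢
      intro g'
      have := hx (g⁻¹ * g')
      simp only [resg, mul_assoc] at this; exact this
  -- conclude by DCC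
  obtain ⟨n₀, hn₀⟩ := hdcc Sig hlin hdecr
  have hAnti : Antitone Sig := antitone_nat_of_succ_le hdecr
  have hback : Sig n₀ ⊆ S := by
    intro x hx
    have hall : ∀ k, x ∈ Sig k := by
      intro k
      have h1 : Sig (max k n₀) = Sig n₀ := hn₀ _ (le_max_right _ _)
      exact hAnti (le_max_left k n₀) (h1 ▸ hx)
    refine mem_of_closed_approx hcl ?_
    intro F
    obtain ⟨k, hk⟩ := hcover F
    have := (hmem k x).mp (hall k) 1
    obtain ⟨y, hyM, hyr⟩ := Submodule.mem_map.mp this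
    refine ⟨y, by rw [← hM]; exact hyM, fun g hg => ?_⟩
    have := congrFun hyr ⟨g, hk hg⟩
    simpa [resE, resg] using this
  exact ⟨E n₀, (P n₀ : Set _), subset_antisymm (hSsub n₀) hback⟩
theorem sft_to_dcc {G : Type*} (K A : Type*) [Group G] [Countable G] [Field K]
    [AddCommGroup A] [Module K A] [FiniteDimensional K A]
    (hsft : ∀ S : Set (G → A), IsLinearSubshift K S → IsSFT S)
    (Ss : ℕ → Set (G → A)) (hSs : ∀ n, IsLinearSubshift K (Ss n))
    (hdec : ∀ n, Ss (n + 1) ⊆ Ss n) : ∃ n₀ : ℕ, ∀ n ≥ n₀, Ss n = Ss n₀ := by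
  classical
  haveI : Nonempty G := ⟨1⟩
  choose M hM using fun n => (hSs n).1
  set S : Set (G → A) := ⋂ n, Ss n with hSdef
  have hSlin : IsLinearSubshift K S := by
    refine ⟨⟨⨅ n, M n, ?_⟩, ?_, ?_⟩
    · ext x
      simp only [SetLike.mem_coe, Submodule.mem_iInf, hSdef, Set.mem_iInter]
      exact forall_congr' fun n => by rw [← hM n]; exact Iff.rfl
    · intro g x hx
      exact Set.mem_iInter.mpr fun n => (hSs n).2.1 g x (Set.mem_iInter.mp hx n)
    · letI := prodiscreteTop G A
      exact isClosed_iInter fun n => (hSs n).2.2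
  obtain ⟨D, P, hD⟩ := hsft S hSlin
  obtain ⟨e, he⟩ := exists_surjective_nat G
  set E : ℕ → Finset G := fun k => D ∪ Finset.image e (Finset.range k) with hE
  have hEsub : ∀ {k j : ℕ}, k ≤ j → (E k : Set G) ⊆ (E j : Set G) := by
    intro k j h
    exact Finset.coe_subset.mpr
      (Finset.union_subset_union_right (Finset.image_subset_image (Finset.range_subset_range.mpr h)))
  have hD0 : (D : Set G) ⊆ (E 0 : Set G) := Finset.coe_subset.mpr Finset.subset_union_left
  have hcover : ∀ F : Finset G, ∃ k, (F : Set G) ⊆ (E k : Set G) := by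
    intro F
    choose nf hnf using fun g => he g
    refine ⟨F.sup nf + 1, fun g hg => ?_⟩
    simp only [hE, Finset.coe_union, Finset.coe_image, Set.mem_union, Set.mem_image,
      Finset.mem_coe, Finset.mem_range]
    exact Or.inr ⟨nf g, by have : nf g ≤ F.sup nf := Finset.le_sup hg; omega, hnf g⟩
  have hMdec : ∀ n, M (n + 1) ≤ M n := by
    intro n x hx
    have : x ∈ Ss (n + 1) := by rw [← hM (n + 1)]; exact hx
    rw [← SetLike.mem_coe, hM n]
    exact hdec n this
  have hmapAnti : ∀ k : Finset G, Antitone fun n => (M n).map (resE (A := A) K k) :=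
    fun k => antitone_nat_of_succ_le fun n => Submodule.map_mono (hMdec n)
  choose N hN using fun k : Finset G =>
    antitone_stabilizes K (fun n => (M n).map (resE (A := A) K k)) fun n => Submodule.map_mono (hMdec n)
  set L : ∀ k : ℕ, Submodule K (↥(E k : Set G) → A) := fun k => (M (N (E k))).map (resE (A := A) K (E k)) with hL
  -- L k is contained in every stage image
  have hLle : ∀ k n, L k ≤ (M n).map (resE (A := A) K (E k)) := by
    intro k n
    calc L k = (M (max n (N (E k)))).map (resE (A := A) K (E k)) :=
          (hN (E k) _ (le_max_right _ _)).symm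
      _ ≤ (M n).map (resE (A := A) K (E k)) := hmapAnti (E k) (le_max_left _ _)
  -- compatibility of the L's under restriction
  have hLres : ∀ k j (h : k ≤ j), (L j).map (resI K (A := A) (hEsub h)) = L k := by
    intro k j h
    have h1 : L j = (M (max (N (E k)) (N (E j)))).map (resE (A := A) K (E j)) :=
      (hN (E j) _ (le_max_right _ _)).symm
    have h2 : L k = (M (max (N (E k)) (N (E j)))).map (resE (A := A) K (E k)) :=
      (hN (E k) _ (le_max_left _ _)).symm
    rw [h1, h2, ← Submodule.map_comp, resE_comp]
  -- one-step lifting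
  have hstep : ∀ k (w : ↥(L k)), ∃ w' : ↥(L (k + 1)),
      ∀ d : ↥(E k : Set G), w'.1 (Set.inclusion (hEsub (Nat.le_succ k)) d) = w.1 d := by
    intro k w
    have : w.1 ∈ (L (k + 1)).map (resI K (A := A) (hEsub (Nat.le_succ k))) := by
      rw [hLres k (k + 1) (Nat.le_succ k)]; exact w.2
    obtain ⟨w', hw', hww⟩ := Submodule.mem_map.mp this
    exact ⟨⟨w', hw'⟩, fun d => congrFun hww d⟩
  choose st hst using hstep
  -- main extension lemma
  have hex : ∀ v, v ∈ L 0 → ∃ z ∈ S, ∀ d : ↥(E 0 : Set G), z (d : G) = v d := by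
    intro v hv
    set u : ∀ k, ↥(L k) := fun k => Nat.rec ⟨v, hv⟩ st k with hu
    have husucc : ∀ k (d : ↥(E k : Set G)),
        (u (k + 1)).1 (Set.inclusion (hEsub (Nat.le_succ k)) d) = (u k).1 d :=
      fun k => hst k (u k)
    have hcompat : ∀ j k (h : k ≤ j) (g : G) (hgk : g ∈ (E k : Set G))
        (hgj : g ∈ (E j : Set G)), (u j).1 ⟨g, hgj⟩ = (u k).1 ⟨g, hgk⟩ := by
      intro j
      induction j with
      | zero =>
        intro k h g hgk hgj
        obtain rfl : k = 0 := Nat.le_zero.mp h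
        rfl
      | succ j ih =>
        intro k h g hgk hgj
        rcases Nat.eq_or_lt_of_le h with rfl | hlt
        · rfl
        · have hkj : k ≤ j := Nat.lt_succ_iff.mp hlt
          have hgj' : g ∈ (E j : Set G) := hEsub hkj hgk
          have h1 : (u (j + 1)).1 ⟨g, hgj⟩ = (u j).1 ⟨g, hgj'⟩ := husucc j ⟨g, hgj'⟩
          rw [h1, ih k hkj g hgk hgj']
    have hGcov : ∀ g : G, ∃ k, g ∈ (E k : Set G) := by
      intro g
      obtain ⟨n, rfl⟩ := he g
      refine ⟨n + 1, ?_⟩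
      simp only [hE, Finset.coe_union, Finset.coe_image, Set.mem_union, Set.mem_image,
        Finset.mem_coe, Finset.mem_range]
      exact Or.inr ⟨n, Nat.lt_succ_self n, rfl⟩
    choose idx hidx using hGcov
    set z : G → A := fun g => (u (idx g)).1 ⟨g, hidx g⟩ with hzdef
    have hz : ∀ k (g : G) (hg : g ∈ (E k : Set G)), z g = (u k).1 ⟨g, hg⟩ := by
      intro k g hg
      have h1 := hcompat (max k (idx g)) (idx g) (le_max_right _ _) g (hidx g)
        (hEsub (le_max_right _ _) (hidx g))
      have h2 := hcompat (max k (idx g)) k (le_max_left _ _) g hg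
        (hEsub (le_max_left _ _) hg)
      calc z g = (u (idx g)).1 ⟨g, hidx g⟩ := rfl
        _ = (u (max k (idx g))).1 ⟨g, _⟩ := h1.symm
        _ = (u k).1 ⟨g, hg⟩ := h2
    have hzS : z ∈ S := by
      refine Set.mem_iInter.mpr fun n => mem_of_closed_approx (hSs n).2.2 fun F => ?_
      obtain ⟨k, hk⟩ := hcover F
      have := hLle k n (u k).2
      obtain ⟨y, hyM, hyr⟩ := Submodule.mem_map.mp this
      refine ⟨y, by rw [← hM n]; exact hyM, fun g hg => ?_⟩
      have hgE : g ∈ (E k : Set G) := hk hg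
      have := congrFun hyr ⟨g, hgE⟩
      rw [hz k g hgE]
      exact this
    exact ⟨z, hzS, fun d => hz 0 (d : G) d.2⟩
  -- conclusion
  have hkey : ∀ n, N (E 0) ≤ n → Ss n ⊆ S := by
    intro n hn x hx
    rw [hD]
    intro g
    have hy : (fun h => x (g * h)) ∈ Ss n := by simpa using (hSs n).2.1 g⁻¹ x hx
    have hyM : (fun h => x (g * h)) ∈ M n := by rw [← SetLike.mem_coe, hM n]; exact hy
    have hv : resE (A := A) K (E 0) (fun h => x (g * h)) ∈ L 0 := by
      have h0 : (M n).map (resE (A := A) K (E 0)) = L 0 := hN (E 0) n hn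
      exact h0 ▸ Submodule.mem_map_of_mem hyM
    obtain ⟨z, hzS, hzv⟩ := hex _ hv
    have hz1 : (fun d : ↥(D : Set G) => z (1 * (d : G))) ∈ P := by
      rw [hD] at hzS; exact hzS 1
    have heq : (fun d : ↥(D : Set G) => x (g * (d : G))) =
        fun d : ↥(D : Set G) => z (1 * (d : G)) := by
      funext d
      rw [one_mul]
      exact (hzv ⟨(d : G), hD0 d.2⟩).symm
    rw [heq]
    exact hz1
  refine ⟨N (E 0), fun n hn => ?_⟩
  have h1 : Ss n = S := subset_antisymm (hkey n hn) (Set.iInter_subset Ss n)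
  have h2 : Ss (N (E 0)) = S := subset_antisymm (hkey _ le_rfl) (Set.iInter_subset Ss _)
  rw [h1, h2]

theorem stmt6 {G : Type*} (K A : Type*) [Group G] [Countable G] [Field K]
    [AddCommGroup A] [Module K A] [FiniteDimensional K A] :
    (∀ S : Set (G → A), IsLinearSubshift K S → IsSFT S) ↔
      (∀ Ss : ℕ → Set (G → A), (∀ n, IsLinearSubshift K (Ss n)) →
        (∀ n, Ss (n + 1) ⊆ Ss n) → ∃ n₀ : ℕ, ∀ n ≥ n₀, Ss n = Ss n₀) := by
  constructor
  · intro hsft Ss hSs hdec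
    exact sft_to_dcc K A hsft Ss hSs hdec
  · intro hdcc S hS
    exact dcc_to_sft K A hdcc S hS
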